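/- arXiv:1904.09712 — 3 statements merged into one kernel-verified Lean document; each statement's English description precedes it below -/
import Mathlib

section
/- Let E be a nontrivial finite-dimensional real inner product space, let d ≥ 2 be a natural number, let α, σ > 0, and define h : E → ℝ by h(x) = (α/d)·‖x‖^d + (σ/2)·‖x‖² + 1. Let f : E → ℝ be twice continuously differentiable and suppose there exist constants C₁, C₂ > 0 such that |D²f(x)(v,v)| ≤ (C₁ + C₂·‖x‖^{d−2})·‖v‖² for all x, v ∈ E. Then f is L_f-relatively smooth with respect to h for every L_f ≥ max{C₁/σ, C₂/α}, i.e. |D²f(x)(v,v)| ≤ L_f·D²h(x)(v,v) for all x, v ∈ E. -/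
open Asymptotics

section aux
variable {E : Type*} [NormedAddCommGroup E] [InnerProductSpace ℝ E]

lemma littleo_norm_pow' {k : ℕ} (hk : 2 ≤ k) :
    (fun y : E => ‖y‖ ^ k) =o[nhds (0 : E)] (fun y : E => y) := by
  have hA : (fun y : E => ‖y‖ ^ (k - 1)) =o[nhds (0 : E)] (fun _ : E => (1 : ℝ)) := by
    rw [isLittleO_one_iff]
    have hc : Continuous (fun y : E => ‖y‖ ^ (k - 1)) := continuous_norm.pow _
    simpa [zero_pow (show k - 1 ≠ 0 by omega)] using hc.tendsto 0
  have hB : (fun y : E => ‖y‖) =O[nhds (0 : E)] (fun y : E => ‖y‖) := isBigO_refl _ _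
  have h := hA.mul_isBigO hB
  rw [← isLittleO_norm_right]
  have heq : (fun y : E => ‖y‖ ^ (k - 1) * ‖y‖) = fun y : E => ‖y‖ ^ k := by
    funext y; rw [← pow_succ]; congr 1; omega
  simpa [heq] using h

lemma hasFDerivAt_norm_of_ne' {x : E} (hx : x ≠ 0) :
    HasFDerivAt (fun y : E => ‖y‖) (‖x‖⁻¹ • innerSL ℝ x) x := by
  have h2 : HasFDerivAt (fun y : E => ‖y‖ ^ 2) ((2 : ℕ) • innerSL ℝ x) x :=
    (hasStrictFDerivAt_norm_sq x).hasFDerivAt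
  have hx' : (0 : ℝ) < ‖x‖ := norm_pos_iff.mpr hx
  have hs : HasDerivAt Real.sqrt (1 / (2 * Real.sqrt (‖x‖ ^ 2))) (‖x‖ ^ 2) :=
    Real.hasDerivAt_sqrt (by positivity)
  have h3 := hs.comp_hasFDerivAt x h2
  have heq : (Real.sqrt ∘ fun y : E => ‖y‖ ^ 2) = fun y : E => ‖y‖ := by
    funext y; simp [Function.comp, Real.sqrt_sq (norm_nonneg y)]
  rw [heq] at h3
  refine h3.congr_fderiv ?_
  rw [Real.sqrt_sq hx'.le]
  ext w
  simp only [ContinuousLinearMap.smul_apply, smul_eq_mul, ← Nat.cast_smul_eq_nsmul ℝ]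
  push_cast
  field_simp

lemma hasFDerivAt_norm_pow_of_ne' {x : E} (hx : x ≠ 0) (k : ℕ) :
    HasFDerivAt (fun y : E => ‖y‖ ^ k)
      (((k : ℝ) * ‖x‖ ^ (k - 1) * ‖x‖⁻¹) • innerSL ℝ x) x := by
  have h := (hasDerivAt_pow k ‖x‖).comp_hasFDerivAt x (hasFDerivAt_norm_of_ne' hx)
  refine h.congr_fderiv ?_
  rw [smul_smul]

lemma hasFDerivAt_norm_pow' {k : ℕ} (hk : 2 ≤ k) (x : E) :
    HasFDerivAt (fun y : E => ‖y‖ ^ k) (((k : ℝ) * ‖x‖ ^ (k - 2)) • innerSL ℝ x) x := by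
  rcases eq_or_ne x 0 with rfl | hx
  · rw [hasFDerivAt_iff_isLittleO_nhds_zero]
    simpa [zero_pow (show k ≠ 0 by omega)] using littleo_norm_pow' (E := E) hk
  · have h := hasFDerivAt_norm_pow_of_ne' hx k
    convert h using 2
    have hnx : ‖x‖ ≠ 0 := norm_ne_zero_iff.mpr hx
    rw [show k - 1 = (k - 2) + 1 by omega, pow_succ]
    field_simp

end aux

set_option maxHeartbeats 1000000 in
set_option synthInstance.maxHeartbeats 400000 in
/-- If `|D²f(x)(v,v)| ≤ (C₁ + C₂‖x‖^{d−2})‖v‖²` for all `x, v`, then `f` is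
`L_f`-relatively smooth with respect to the kernel
`h(x) = (α/d)‖x‖^d + (σ/2)‖x‖² + 1` for every `L_f ≥ max{C₁/σ, C₂/α}`. -/
theorem relative_smoothness_from_hessian_growth
    {E : Type*} [NormedAddCommGroup E] [InnerProductSpace ℝ E]
    [FiniteDimensional ℝ E] [Nontrivial E]
    (d : ℕ) (hd : 2 ≤ d) (α σ : ℝ) (hα : 0 < α) (hσ : 0 < σ)
    (h : E → ℝ)
    (hdef : ∀ x : E, h x = (α / d) * ‖x‖ ^ d + (σ / 2) * ‖x‖ ^ 2 + 1)
    (f : E → ℝ) (hf : ContDiff ℝ 2 f)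
    (C₁ C₂ : ℝ) (hC₁ : 0 < C₁) (hC₂ : 0 < C₂)
    (hgrowth : ∀ x v : E,
      |iteratedFDeriv ℝ 2 f x ![v, v]| ≤ (C₁ + C₂ * ‖x‖ ^ (d - 2)) * ‖v‖ ^ 2)
    (Lf : ℝ) (hLf : max (C₁ / σ) (C₂ / α) ≤ Lf) :
    ∀ x v : E,
      |iteratedFDeriv ℝ 2 f x ![v, v]| ≤ Lf * iteratedFDeriv ℝ 2 h x ![v, v] := by
  have hfun : h = fun y : E => (α / d) * ‖y‖ ^ d + (σ / 2) * ‖y‖ ^ 2 + 1 := funext hdef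
  set F : E → (E →L[ℝ] ℝ) := fun y => (α * ‖y‖ ^ (d - 2) + σ) • innerSL ℝ y with hF
  have hdR : (d : ℝ) ≠ 0 := by
    exact_mod_cast (show d ≠ 0 by omega)
  have hA : ∀ y : E, HasFDerivAt h (F y) y := by
    intro y
    have h1 := (hasFDerivAt_norm_pow' hd y).const_mul (α / d)
    have h2 := (hasFDerivAt_norm_pow' (le_refl 2) y).const_mul (σ / 2)
    have h3 := (h1.add h2).add_const 1
    rw [hfun]
    refine h3.congr_fderiv ?_
    simp only [hF, smul_smul]
    rw [← add_smul]
    congr 1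
    field_simp
    ring
  have hfd : fderiv ℝ h = F := funext fun y => (hA y).fderiv
  have key : ∀ x v : E,
      (α * ‖x‖ ^ (d - 2) + σ) * ‖v‖ ^ 2 ≤ iteratedFDeriv ℝ 2 h x ![v, v] := by
    intro x v
    obtain ⟨B, hB, hBv⟩ :
        ∃ B : E →L[ℝ] E →L[ℝ] ℝ, HasFDerivAt F B x ∧
          (α * ‖x‖ ^ (d - 2) + σ) * ‖v‖ ^ 2 ≤ B v v := by
      rcases eq_or_ne x 0 with rfl | hx
      · refine ⟨(α * ‖(0 : E)‖ ^ (d - 2) + σ) • (innerSL ℝ : E →L[ℝ] E →L[ℝ] ℝ), ?_, ?_⟩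
        · rcases eq_or_lt_of_le hd with hd2 | hd3
          · have hFeq : F = ⇑((α * ‖(0 : E)‖ ^ (d - 2) + σ) •
                (innerSL ℝ : E →L[ℝ] E →L[ℝ] ℝ)) := by
              funext y
              simp [hF, ← hd2]
            rw [hFeq]
            exact ContinuousLinearMap.hasFDerivAt _
          · rw [hasFDerivAt_iff_isLittleO_nhds_zero]
            have h1 : (fun y : E => ‖y‖ ^ (d - 1)) =o[nhds (0 : E)] fun y => y :=
              littleo_norm_pow' (by omega)
            have h2 : (fun y : E => F (0 + y) - F 0 -
                ((α * ‖(0 : E)‖ ^ (d - 2) + σ) • (innerSL ℝ : E →L[ℝ] E →L[ℝ] ℝ)) y)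
                =O[nhds (0 : E)] (fun y : E => ‖y‖ ^ (d - 1)) := by
              rw [isBigO_iff]
              refine ⟨α, Filter.Eventually.of_forall fun y => ?_⟩
              have hz : ‖(0 : E)‖ ^ (d - 2) = 0 := by
                simp [zero_pow (show d - 2 ≠ 0 by omega)]
              simp only [hF, zero_add, map_zero, smul_zero, sub_zero, hz, mul_zero,
                ContinuousLinearMap.smul_apply]
              have : (α * ‖y‖ ^ (d - 2) + σ) • (innerSL ℝ) y - σ • (innerSL ℝ) y
                  = (α * ‖y‖ ^ (d - 2)) • (innerSL ℝ) y := by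
                rw [← sub_smul]; congr 1; ring
              rw [this]
              have hin : ‖(innerSL ℝ) y‖ ≤ ‖y‖ := by
                refine ContinuousLinearMap.opNorm_le_bound _ (norm_nonneg y) fun w => ?_
                simpa using abs_real_inner_le_norm y w
              calc ‖(α * ‖y‖ ^ (d - 2)) • (innerSL ℝ) y‖
                  ≤ ‖α * ‖y‖ ^ (d - 2)‖ * ‖(innerSL ℝ) y‖ := ContinuousLinearMap.opNorm_smul_le _ _
                _ ≤ (α * ‖y‖ ^ (d - 2)) * ‖y‖ := by
                    rw [Real.norm_eq_abs, abs_of_nonneg (by positivity)]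
                    exact mul_le_mul_of_nonneg_left hin (by positivity)
                _ = α * ‖y‖ ^ (d - 1) := by
                    rw [show d - 1 = (d - 2) + 1 by omega, pow_succ]; ring
                _ ≤ α * ‖(‖y‖ ^ (d - 1))‖ := by
                    rw [Real.norm_eq_abs, abs_of_nonneg (by positivity)]
            exact h2.trans_isLittleO h1
        · simp only [ContinuousLinearMap.smul_apply, smul_eq_mul, innerSL_apply_apply,
            real_inner_self_eq_norm_sq]
          change _ * ‖v‖ ^ 2 ≤ _ * inner ℝ v v
          rw [real_inner_self_eq_norm_sq]
      · have hs : HasFDerivAt (fun y : E => α * ‖y‖ ^ (d - 2) + σ)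
            ((α * (((d - 2 : ℕ) : ℝ) * ‖x‖ ^ (d - 2 - 1) * ‖x‖⁻¹)) • innerSL ℝ x) x := by
          have h0 := ((hasFDerivAt_norm_pow_of_ne' hx (d - 2)).const_mul α).add_const σ
          refine h0.congr_fderiv ?_
          rw [smul_smul]
        have hi : HasFDerivAt (fun y : E => innerSL ℝ y) (innerSL ℝ : E →L[ℝ] E →L[ℝ] ℝ) x :=
          (innerSL ℝ : E →L[ℝ] E →L[ℝ] ℝ).hasFDerivAt
        have hBd := hs.smul hi
        refine ⟨_, hBd, ?_⟩
        have c0 : 0 ≤ α * (((d - 2 : ℕ) : ℝ) * ‖x‖ ^ (d - 2 - 1) * ‖x‖⁻¹) := by positivity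
        simp only [ContinuousLinearMap.add_apply, ContinuousLinearMap.smul_apply,
          ContinuousLinearMap.smulRight_apply, smul_eq_mul]
        simp only [innerSL_apply_apply] at *
        change _ ≤ _ * inner ℝ v v + _
        rw [real_inner_self_eq_norm_sq]
        nlinarith [mul_nonneg c0 (mul_self_nonneg (inner ℝ x v : ℝ))]
    have h2a : iteratedFDeriv ℝ 2 h x ![v, v] = B v v := by
      rw [iteratedFDeriv_two_apply, hfd, hB.fderiv]
      simp
    rw [h2a]
    exact hBv
  intro x v
  have hLσ : C₁ ≤ Lf * σ := by
    have := le_trans (le_max_left (C₁ / σ) (C₂ / α)) hLf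
    rw [div_le_iff₀ hσ] at this
    linarith
  have hLα : C₂ ≤ Lf * α := by
    have := le_trans (le_max_right (C₁ / σ) (C₂ / α)) hLf
    rw [div_le_iff₀ hα] at this
    linarith
  have hLf0 : (0 : ℝ) ≤ Lf :=
    le_trans (le_of_lt (div_pos hC₁ hσ)) (le_trans (le_max_left _ _) hLf)
  have ht : (0 : ℝ) ≤ ‖x‖ ^ (d - 2) := by positivity
  have hv : (0 : ℝ) ≤ ‖v‖ ^ 2 := by positivity
  calc |iteratedFDeriv ℝ 2 f x ![v, v]|
      ≤ (C₁ + C₂ * ‖x‖ ^ (d - 2)) * ‖v‖ ^ 2 := hgrowth x v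
    _ ≤ Lf * ((α * ‖x‖ ^ (d - 2) + σ) * ‖v‖ ^ 2) := by
        nlinarith [mul_nonneg (sub_nonneg.2 hLσ) hv, mul_nonneg (mul_nonneg (sub_nonneg.2 hLα) ht) hv]
    _ ≤ Lf * iteratedFDeriv ℝ 2 h x ![v, v] :=
        mul_le_mul_of_nonneg_left (key x v) hLf0
end

section
/- Let E be a real inner product space, let h : E → ℝ be given by h(x) = ‖x‖⁴/4 + ‖x‖²/2 + 1, let η > 0, and let g, x⁻ ∈ E. Then the point x₊ := Π((‖x⁻‖² + 1)·x⁻ − η·g), with Π as defined below, is the unique global minimizer over E of the function ψ(x) := ⟪g, x − x⁻⟫ + (1/η)·(h(x) − h(x⁻) − ⟪(‖x⁻‖² + 1)·x⁻, x − x⁻⟫). (Closed-form implementation of the Bregman gradient descent step for a fourth-degree Bregman kernel, with g = ∇f(x⁻).) -/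
open scoped RealInnerProductSpace

/-- The explicit formula for the unique real root of the cubic `t³ + t = a`. -/
noncomputable def tau (a : ℝ) : ℝ :=
  ((2 : ℝ) ^ ((1 : ℝ) / 3) * (Real.sqrt (81 * a ^ 2 + 12) + 9 * a) ^ ((2 : ℝ) / 3) -
      2 * (3 : ℝ) ^ ((1 : ℝ) / 3)) /
    ((6 : ℝ) ^ ((2 : ℝ) / 3) * (Real.sqrt (81 * a ^ 2 + 12) + 9 * a) ^ ((1 : ℝ) / 3))

/-- The rescaling map `Π(w) = (τ(‖w‖)/‖w‖)·w` (and `Π(0) = 0`). -/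
noncomputable def Pi' {E : Type*} [NormedAddCommGroup E] [InnerProductSpace ℝ E]
    (w : E) : E :=
  letI := Classical.dec (w = 0)
  if w = 0 then 0 else (tau ‖w‖ / ‖w‖) • w

lemma tau_spec (a : ℝ) (ha : 0 ≤ a) : tau a ^ 3 + tau a = a := by
  have hB : (0:ℝ) < 81 * a ^ 2 + 12 := by positivity
  have hsBpos : 0 < Real.sqrt (81 * a ^ 2 + 12) := Real.sqrt_pos.mpr hB
  set sB := Real.sqrt (81 * a ^ 2 + 12) with hsBdef
  have hsB2 : sB ^ 2 = 81 * a ^ 2 + 12 := Real.sq_sqrt hB.le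
  have hc : (0:ℝ) < sB + 9 * a := by positivity
  set c := sB + 9 * a with hcdef
  set p := (2:ℝ) ^ ((1:ℝ)/3) with hpdef
  set q := (3:ℝ) ^ ((1:ℝ)/3) with hqdef
  set s := c ^ ((1:ℝ)/3) with hsdef
  have hp0 : 0 < p := Real.rpow_pos_of_pos (by norm_num) _
  have hq0 : 0 < q := Real.rpow_pos_of_pos (by norm_num) _
  have hs0 : 0 < s := Real.rpow_pos_of_pos hc _
  have hp : p ^ 3 = 2 := by
    rw [hpdef, ← Real.rpow_natCast ((2:ℝ) ^ ((1:ℝ)/3)) 3,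
      ← Real.rpow_mul (by norm_num : (0:ℝ) ≤ 2)]
    norm_num
  have hq : q ^ 3 = 3 := by
    rw [hqdef, ← Real.rpow_natCast ((3:ℝ) ^ ((1:ℝ)/3)) 3,
      ← Real.rpow_mul (by norm_num : (0:ℝ) ≤ 3)]
    norm_num
  have hs : s ^ 3 = c := by
    rw [hsdef, ← Real.rpow_natCast (c ^ ((1:ℝ)/3)) 3, ← Real.rpow_mul hc.le]
    norm_num
  have h23 : c ^ ((2:ℝ)/3) = s ^ 2 := by
    rw [hsdef, ← Real.rpow_natCast (c ^ ((1:ℝ)/3)) 2, ← Real.rpow_mul hc.le]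
    norm_num
  have h2 : (2:ℝ) ^ ((2:ℝ)/3) = p ^ 2 := by
    rw [hpdef, ← Real.rpow_natCast ((2:ℝ) ^ ((1:ℝ)/3)) 2,
      ← Real.rpow_mul (by norm_num : (0:ℝ) ≤ 2)]
    norm_num
  have h3 : (3:ℝ) ^ ((2:ℝ)/3) = q ^ 2 := by
    rw [hqdef, ← Real.rpow_natCast ((3:ℝ) ^ ((1:ℝ)/3)) 2,
      ← Real.rpow_mul (by norm_num : (0:ℝ) ≤ 3)]
    norm_num
  have h6 : (6:ℝ) ^ ((2:ℝ)/3) = p ^ 2 * q ^ 2 := by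
    have : (6:ℝ) = 2 * 3 := by norm_num
    rw [this, Real.mul_rpow (by norm_num) (by norm_num), h2, h3]
  have htau : tau a = (s ^ 2 - p ^ 2 * q) / (p * q ^ 2 * s) := by
    rw [tau, ← hsBdef, ← hcdef, h23, h6, ← hpdef, ← hqdef, ← hsdef]
    rw [div_eq_div_iff (by positivity) (by positivity)]
    ring_nf
    linear_combination (p * q ^ 3 * s) * hp
  rw [htau]
  have hden : p * q ^ 2 * s ≠ 0 := by positivity
  have key : ((s ^ 2 - p ^ 2 * q) / (p * q ^ 2 * s)) ^ 3 +
      (s ^ 2 - p ^ 2 * q) / (p * q ^ 2 * s) =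
      ((s ^ 2 - p ^ 2 * q) ^ 3 + (s ^ 2 - p ^ 2 * q) * (p * q ^ 2 * s) ^ 2) /
        (p * q ^ 2 * s) ^ 3 := by
    field_simp
  rw [key]
  have hnum : (s ^ 2 - p ^ 2 * q) ^ 3 + (s ^ 2 - p ^ 2 * q) * (p * q ^ 2 * s) ^ 2
      = c ^ 2 - 12 := by
    linear_combination (s ^ 3 + c) * hs + (p ^ 2 * q * s ^ 4 - p ^ 4 * q ^ 2 * s ^ 2 - 4) * hq
      + (-(q ^ 3) * (p ^ 3 + 2)) * hp
  have hden3 : (p * q ^ 2 * s) ^ 3 = 18 * c := by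
    calc (p * q ^ 2 * s) ^ 3 = p ^ 3 * (q ^ 3) ^ 2 * s ^ 3 := by ring
    _ = 18 * c := by rw [hp, hq, hs]; ring
  rw [hnum, hden3]
  have hc2 : c ^ 2 - 12 = 18 * a * c := by
    rw [hcdef]
    linear_combination hsB2
  rw [hc2]
  field_simp

lemma phi_min {E : Type*} [NormedAddCommGroup E] [InnerProductSpace ℝ E]
    (w x : E) (hx : x ≠ Pi' w) :
    ‖Pi' w‖ ^ 4 / 4 + ‖Pi' w‖ ^ 2 / 2 - ⟪w, Pi' w⟫ <
      ‖x‖ ^ 4 / 4 + ‖x‖ ^ 2 / 2 - ⟪w, x⟫ := by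
  by_cases hw0 : w = 0
  · have hPi : Pi' w = 0 := by simp [Pi', hw0]
    rw [hPi] at hx ⊢
    have hxn : 0 < ‖x‖ := norm_pos_iff.mpr hx
    simp only [hw0, inner_zero_left, norm_zero]
    nlinarith [hxn]
  · have haw : 0 < ‖w‖ := norm_pos_iff.mpr hw0
    set a := ‖w‖ with hadef
    set t := tau a with htdef
    have ht3 : t ^ 3 + t = a := tau_spec a haw.le
    have ht0 : 0 ≤ t := by
      by_contra hlt
      push_neg at hlt
      nlinarith [mul_nonneg (sq_nonneg t) (neg_nonneg.mpr hlt.le)]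
    have hPi : Pi' w = (t / a) • w := by simp [Pi', hw0, htdef, hadef]
    have hnormPi : ‖Pi' w‖ = t := by
      rw [hPi, norm_smul, Real.norm_eq_abs, abs_of_nonneg (by positivity)]
      field_simp
      rw [← hadef]
    have hinnerPi : ⟪w, Pi' w⟫ = t * a := by
      rw [hPi, real_inner_smul_right, real_inner_self_eq_norm_sq]
      field_simp
      ring
    rw [hnormPi, hinnerPi]
    set r := ‖x‖ with hrdef
    have hr0 : 0 ≤ r := norm_nonneg x
    have hCS : ⟪w, x⟫ ≤ a * r := real_inner_le_norm w x
    rcases eq_or_ne r t with hrt | hrt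
    · rcases lt_or_eq_of_le hCS with hlt | heq
      · rw [hrt] at hlt ⊢
        linarith
      · exfalso
        apply hx
        have h2 : r • w = a • x := inner_eq_norm_mul_iff_real.mp heq
        rw [hPi, ← hrt, div_eq_inv_mul, mul_smul, h2, smul_smul,
          inv_mul_cancel₀ haw.ne', one_smul]
    · have hd : 0 < (r - t) ^ 2 := by
        have h := sub_ne_zero.mpr hrt
        positivity
      have hP : 0 < (r - t) ^ 2 * (r ^ 2 + 2 * r * t + 3 * t ^ 2 + 2) :=
        mul_pos hd (by nlinarith)
      have hgoal : t ^ 4 / 4 + t ^ 2 / 2 - t * (t ^ 3 + t) <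
          r ^ 4 / 4 + r ^ 2 / 2 - (t ^ 3 + t) * r := by nlinarith [hP]
      rw [ht3] at hgoal
      linarith

/-- **Closed-form implementation of the B-GD step for the fourth-degree kernel**
`h(x) = ‖x‖⁴/4 + ‖x‖²/2 + 1`: the point `x₊ = Π((‖x⁻‖² + 1)x⁻ − ηg)` is the unique
global minimizer of `ψ(x) = ⟪g, x − x⁻⟫ + (1/η)(h(x) − h(x⁻) − ⟪(‖x⁻‖² + 1)x⁻, x − x⁻⟫)`. -/
theorem bgd_closed_form_fourth_degree
    {E : Type*} [NormedAddCommGroup E] [InnerProductSpace ℝ E]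
    (h : E → ℝ) (hdef : ∀ x : E, h x = ‖x‖ ^ 4 / 4 + ‖x‖ ^ 2 / 2 + 1)
    (η : ℝ) (hη : 0 < η) (g xm : E)
    (ψ : E → ℝ)
    (hψ : ∀ x : E, ψ x = ⟪g, x - xm⟫ +
      (1 / η) * (h x - h xm - ⟪(‖xm‖ ^ 2 + 1) • xm, x - xm⟫)) :
    (∀ x : E, ψ (Pi' ((‖xm‖ ^ 2 + 1) • xm - η • g)) ≤ ψ x) ∧
      ∀ x' : E, (∀ x : E, ψ x' ≤ ψ x) → x' = Pi' ((‖xm‖ ^ 2 + 1) • xm - η • g) := by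
  set w : E := (‖xm‖ ^ 2 + 1) • xm - η • g with hwdef
  have hφψ : ∀ x y : E, ψ x - ψ y =
      (1 / η) * ((‖x‖ ^ 4 / 4 + ‖x‖ ^ 2 / 2 - ⟪w, x⟫) -
        (‖y‖ ^ 4 / 4 + ‖y‖ ^ 2 / 2 - ⟪w, y⟫)) := by
    intro x y
    simp only [hψ, hdef, hwdef, inner_sub_right, inner_sub_left, real_inner_smul_left]
    field_simp
    ring
  have hη' : (0:ℝ) < 1 / η := by positivity
  constructor
  · intro x
    rcases eq_or_ne x (Pi' w) with hxx | hxx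
    · rw [hxx]
    · have h1 := phi_min w x hxx
      have h2 := hφψ (Pi' w) x
      have h4 : (1 / η) * ((‖Pi' w‖ ^ 4 / 4 + ‖Pi' w‖ ^ 2 / 2 - ⟪w, Pi' w⟫) -
          (‖x‖ ^ 4 / 4 + ‖x‖ ^ 2 / 2 - ⟪w, x⟫)) < 0 :=
        mul_neg_of_pos_of_neg hη' (by linarith)
      linarith
  · intro x' hx'
    by_contra hne
    have h1 := phi_min w x' hne
    have h2 := hx' (Pi' w)
    have h3 := hφψ x' (Pi' w)
    have h4 : 0 < (1 / η) * ((‖x'‖ ^ 4 / 4 + ‖x'‖ ^ 2 / 2 - ⟪w, x'⟫) -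
        (‖Pi' w‖ ^ 4 / 4 + ‖Pi' w‖ ^ 2 / 2 - ⟪w, Pi' w⟫)) :=
      mul_pos hη' (by linarith)
    linarith
end

section
/- Let n, m ≥ 1, let H₁, F₁₁ be real symmetric n×n matrices, H₂, F₂₂ real symmetric m×m matrices, and F₁₂ a real n×m matrix, let η > 0, and suppose H₁ + η·F₁₁ and H₂ + η·F₂₂ are positive definite and the symmetric block matrix F := [[F₁₁, F₁₂], [F₁₂ᵀ, F₂₂]] has a negative direction, i.e. there exists z ≠ 0 with zᵀFz < 0. Then there exists a real number μ > 1 such that the block matrix J(μ) := [[(μ−1)·H₁ + μ·η·F₁₁, √μ·η·F₁₂], [√μ·η·F₁₂ᵀ, (μ−1)·H₂ + μ·η·F₂₂]] is singular, i.e. det(J(μ)) = 0. (Key matrix lemma showing strict saddles are unstable fixed points of Bregman proximal alternating minimization.) -/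
open Matrix

lemma quad_abs_le {k : Type*} [Fintype k] (M : Matrix k k ℝ) (z : k → ℝ)
    (hz : ∀ i, |z i| ≤ 1) : |z ⬝ᵥ M *ᵥ z| ≤ ∑ i, ∑ j, |M i j| := by
  calc |z ⬝ᵥ M *ᵥ z| = |∑ i, ∑ j, z i * (M i j * z j)| := by
        simp [dotProduct, mulVec, Finset.mul_sum]
    _ ≤ ∑ i, ∑ j, |z i * (M i j * z j)| :=
        (Finset.abs_sum_le_sum_abs _ _).trans
          (Finset.sum_le_sum fun i _ => Finset.abs_sum_le_sum_abs _ _)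
    _ ≤ ∑ i, ∑ j, |M i j| := by
        refine Finset.sum_le_sum fun i _ => Finset.sum_le_sum fun j _ => ?_
        rw [abs_mul, abs_mul]
        calc |z i| * (|M i j| * |z j|) ≤ 1 * (|M i j| * 1) := by
              gcongr <;> [exact hz i; exact hz j]
          _ = |M i j| := by ring

lemma quad_scale {k : Type*} [Fintype k] (M : Matrix k k ℝ) (c : ℝ) (z : k → ℝ) :
    (c • z) ⬝ᵥ M *ᵥ (c • z) = c ^ 2 * (z ⬝ᵥ M *ᵥ z) := by
  rw [mulVec_smul, smul_dotProduct, dotProduct_smul]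
  simp [smul_eq_mul]; ring

lemma quad_cont {k : Type*} [Fintype k] (M : Matrix k k ℝ) :
    Continuous fun z : k → ℝ => z ⬝ᵥ M *ᵥ z := by
  simp only [dotProduct, mulVec]
  fun_prop

lemma neg_mul_le_of_abs_le (c x K : ℝ) (hc : 0 ≤ c) (hK : |x| ≤ K) : -(c * K) ≤ c * x := by
  nlinarith [(abs_le.mp hK).1]

lemma choose_pos (α η C₁ C₂ t : ℝ) (hα : 0 < α) (hη : 0 < η) (hC₁ : 0 ≤ C₁)
    (hC₂ : 0 ≤ C₂) (ht : 1 < t) (htD : η * C₁ + η * C₂ + 1 ≤ (t - 1) * α) :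
    0 < (t ^ 2 - 1) * α - η * C₁ - (t - 1) * η * C₂ := by
  have key : (t + 1) * (η * C₁ + η * C₂ + 1) ≤ (t + 1) * ((t - 1) * α) :=
    mul_le_mul_of_nonneg_left htD (by linarith)
  nlinarith [mul_nonneg (mul_nonneg hη.le hC₁) (by linarith : (0:ℝ) ≤ t),
    mul_nonneg hη.le hC₂]

set_option maxHeartbeats 2000000 in
/-- **Key matrix lemma for B-PAM: strict saddles are unstable fixed points.**
With `H₁, F₁₁, H₂, F₂₂` symmetric, `η > 0`, `H₁ + ηF₁₁` and `H₂ + ηF₂₂` positive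
definite, and the block matrix `F = [[F₁₁, F₁₂], [F₁₂ᵀ, F₂₂]]` having a negative
direction, there is `μ > 1` making the block matrix
`J(μ) = [[(μ−1)H₁ + μηF₁₁, √μ η F₁₂], [√μ η F₁₂ᵀ, (μ−1)H₂ + μηF₂₂]]` singular. -/
theorem bpam_strict_saddle_unstable
    (n m : ℕ) (hn : 1 ≤ n) (hm : 1 ≤ m)
    (H₁ F₁₁ : Matrix (Fin n) (Fin n) ℝ) (H₂ F₂₂ : Matrix (Fin m) (Fin m) ℝ)
    (F₁₂ : Matrix (Fin n) (Fin m) ℝ)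
    (hH₁symm : H₁.IsSymm) (hF₁₁symm : F₁₁.IsSymm)
    (hH₂symm : H₂.IsSymm) (hF₂₂symm : F₂₂.IsSymm)
    (η : ℝ) (hη : 0 < η)
    (hpd₁ : (H₁ + η • F₁₁).PosDef) (hpd₂ : (H₂ + η • F₂₂).PosDef)
    (hFneg : ∃ z : (Fin n ⊕ Fin m) → ℝ, z ≠ 0 ∧
      z ⬝ᵥ ((Matrix.fromBlocks F₁₁ F₁₂ F₁₂ᵀ F₂₂) *ᵥ z) < 0) :
    ∃ μ : ℝ, 1 < μ ∧
      (Matrix.fromBlocks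
        ((μ - 1) • H₁ + (μ * η) • F₁₁) ((Real.sqrt μ * η) • F₁₂)
        ((Real.sqrt μ * η) • F₁₂ᵀ) ((μ - 1) • H₂ + (μ * η) • F₂₂)).det = 0 := by
  classical
  obtain ⟨z₀, hz₀ne, hz₀neg⟩ := hFneg
  set J : ℝ → Matrix (Fin n ⊕ Fin m) (Fin n ⊕ Fin m) ℝ := fun μ =>
    Matrix.fromBlocks ((μ - 1) • H₁ + (μ * η) • F₁₁) ((Real.sqrt μ * η) • F₁₂)
      ((Real.sqrt μ * η) • F₁₂ᵀ) ((μ - 1) • H₂ + (μ * η) • F₂₂) with hJdef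
  set Q : ℝ → ((Fin n ⊕ Fin m) → ℝ) → ℝ := fun μ z => z ⬝ᵥ (J μ *ᵥ z) with hQdef
  set S : Set ((Fin n ⊕ Fin m) → ℝ) := Metric.sphere 0 1 with hSdef
  -- basic facts about the sphere
  have hScomp : IsCompact S := isCompact_sphere 0 1
  have hSnorm : ∀ z ∈ S, ‖z‖ = 1 := fun z hz => by
    simpa [hSdef] using hz
  have hSbound : ∀ z ∈ S, ∀ i, |z i| ≤ 1 := fun z hz i => by
    have := norm_le_pi_norm z i
    rw [hSnorm z hz] at this
    simpa using this
  have hSne : ∀ z ∈ S, z ≠ 0 := fun z hz h0 => by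
    have := hSnorm z hz; rw [h0] at this; simp at this
  -- continuity in z
  have hQz : ∀ μ, Continuous fun z => Q μ z := fun μ => quad_cont (J μ)
  -- continuity of entries in μ
  have hJcont : ∀ p q, Continuous fun μ => J μ p q := by
    intro p q
    cases p <;> cases q <;>
      simp only [hJdef, Matrix.fromBlocks_apply₁₁, Matrix.fromBlocks_apply₁₂,
        Matrix.fromBlocks_apply₂₁, Matrix.fromBlocks_apply₂₂, Matrix.add_apply,
        Matrix.smul_apply, smul_eq_mul] <;>
      fun_prop
  have hQμ : ∀ z, Continuous fun μ => Q μ z := by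
    intro z
    simp only [hQdef, dotProduct, mulVec]
    exact continuous_finset_sum _ fun i _ =>
      (continuous_const.mul (continuous_finset_sum _ fun j _ =>
        (hJcont i j).mul continuous_const))
  -- the minimum function g
  set g : ℝ → ℝ := fun μ => sInf (Q μ '' S) with hgdef
  -- normalized negative direction
  have hz₀norm : ‖z₀‖ ≠ 0 := norm_ne_zero_iff.mpr hz₀ne
  set w : (Fin n ⊕ Fin m) → ℝ := ‖z₀‖⁻¹ • z₀ with hwdef
  have hwS : w ∈ S := by
    rw [hSdef, mem_sphere_zero_iff_norm, hwdef, norm_smul]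
    simp [norm_inv, inv_mul_cancel₀ hz₀norm]
  have hSnonempty : S.Nonempty := ⟨w, hwS⟩
  have hgmem : ∀ μ, g μ ∈ Q μ '' S := fun μ =>
    (hScomp.image (hQz μ)).sInf_mem (hSnonempty.image _)
  have hgle : ∀ μ, ∀ z ∈ S, g μ ≤ Q μ z := fun μ z hz =>
    csInf_le (hScomp.image (hQz μ)).bddBelow ⟨z, hz, rfl⟩
  -- continuity of g
  have hgcont : Continuous g := by
    rw [continuous_iff_continuousAt]
    intro μ
    set B : ℝ → ℝ := fun μ' => ∑ p, ∑ q, |J μ' p q - J μ p q| with hBdef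
    have hKey : ∀ μ', |g μ' - g μ| ≤ B μ' := by
      intro μ'
      obtain ⟨w', hw'S, hw'⟩ := hgmem μ'
      obtain ⟨w'', hw''S, hw''⟩ := hgmem μ
      rw [abs_sub_le_iff]
      constructor
      · have h1 : g μ' ≤ Q μ' w'' := hgle μ' w'' hw''S
        have h2 : Q μ' w'' - Q μ w'' ≤ B μ' := by
          have heq : Q μ' w'' - Q μ w'' = w'' ⬝ᵥ (J μ' - J μ) *ᵥ w'' := by
            simp [hQdef, Matrix.sub_mulVec, dotProduct_sub]
          rw [heq]
          exact le_trans (le_abs_self _) (quad_abs_le _ _ (hSbound w'' hw''S))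
        rw [← hw'']
        linarith
      · have h1 : g μ ≤ Q μ w' := hgle μ w' hw'S
        have h2 : Q μ w' - Q μ' w' ≤ B μ' := by
          have heq : Q μ w' - Q μ' w' = w' ⬝ᵥ (J μ - J μ') *ᵥ w' := by
            simp [hQdef, Matrix.sub_mulVec, dotProduct_sub]
          have hb := le_trans (le_abs_self _)
            (quad_abs_le (J μ - J μ') w' (hSbound w' hw'S))
          rw [heq]
          refine hb.trans (le_of_eq ?_)
          simp [hBdef, Matrix.sub_apply, abs_sub_comm]
        rw [← hw']
        linarith
    have hBcont : Continuous B := by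
      refine continuous_finset_sum _ fun p _ => continuous_finset_sum _ fun q _ => ?_
      exact ((hJcont p q).sub continuous_const).abs
    have hB0 : Filter.Tendsto B (nhds μ) (nhds 0) := by
      have hBμ : B μ = 0 := by
        simp only [hBdef, sub_self, abs_zero, Finset.sum_const_zero]
      simpa [hBμ] using hBcont.tendsto μ
    have hsq : Filter.Tendsto (fun μ' => g μ' - g μ) (nhds μ) (nhds 0) :=
      squeeze_zero_norm (fun μ' => by simpa [Real.norm_eq_abs] using hKey μ') hB0
    have : Filter.Tendsto g (nhds μ) (nhds (g μ)) := by
      have := hsq.add_const (g μ)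
      simpa using this
    exact this
  -- Q 1 w < 0
  have hJ1 : J 1 = η • Matrix.fromBlocks F₁₁ F₁₂ F₁₂ᵀ F₂₂ := by
    rw [hJdef]
    simp only [Real.sqrt_one, Matrix.fromBlocks_smul]
    norm_num
  have hQ1w : Q 1 w < 0 := by
    have h1 : Q 1 z₀ < 0 := by
      rw [hQdef]
      simp only [hJ1, smul_mulVec, dotProduct_smul, smul_eq_mul]
      exact mul_neg_of_pos_of_neg hη hz₀neg
    rw [hQdef, hwdef]
    simp only []
    rw [quad_scale]
    have : (0:ℝ) < (‖z₀‖⁻¹) ^ 2 := by positivity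
    exact mul_neg_of_pos_of_neg this h1
  -- a point μ₀ > 1 with g μ₀ < 0
  obtain ⟨μ₀, hμ₀gt, hμ₀neg⟩ : ∃ μ₀, 1 < μ₀ ∧ g μ₀ < 0 := by
    have hev : ∀ᶠ μ' in nhds (1:ℝ), Q μ' w < 0 :=
      ((hQμ w).continuousAt (x := 1)).eventually_lt_const hQ1w
    have hev' : ∀ᶠ μ' in nhdsWithin (1:ℝ) (Set.Ioi 1), Q μ' w < 0 :=
      hev.filter_mono nhdsWithin_le_nhds
    have hmem : ∀ᶠ μ' in nhdsWithin (1:ℝ) (Set.Ioi 1), μ' ∈ Set.Ioi (1:ℝ) :=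
      self_mem_nhdsWithin
    obtain ⟨μ₀, h1, h2⟩ := (hev'.and hmem).exists
    exact ⟨μ₀, h2, lt_of_le_of_lt (hgle μ₀ w hwS) h1⟩
  -- a point M ≥ μ₀ with g M > 0
  obtain ⟨M, hMge, hMpos⟩ : ∃ M, μ₀ ≤ M ∧ 0 < g M := by
    set P : Matrix (Fin n ⊕ Fin m) (Fin n ⊕ Fin m) ℝ :=
      Matrix.fromBlocks (H₁ + η • F₁₁) 0 0 (H₂ + η • F₂₂) with hPdef
    have hPpos : ∀ z ∈ S, 0 < z ⬝ᵥ P *ᵥ z := by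
      intro z hz
      have hform : z ⬝ᵥ P *ᵥ z =
          (z ∘ Sum.inl) ⬝ᵥ (H₁ + η • F₁₁) *ᵥ (z ∘ Sum.inl)
            + (z ∘ Sum.inr) ⬝ᵥ (H₂ + η • F₂₂) *ᵥ (z ∘ Sum.inr) := by
        rw [hPdef, Matrix.fromBlocks_mulVec]
        simp only [Matrix.zero_mulVec, add_zero, zero_add]
        nth_rewrite 1 [← Sum.elim_comp_inl_inr z]
        rw [sumElim_dotProduct_sumElim]
      have hz0 := hSne z hz
      by_cases h1 : (z ∘ Sum.inl) = 0
      · have h2 : (z ∘ Sum.inr) ≠ 0 := by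
          intro h2
          apply hz0
          funext i
          cases i with
          | inl i => exact congrFun h1 i
          | inr i => exact congrFun h2 i
        have t2 := hpd₂.dotProduct_mulVec_pos h2
        rw [star_trivial] at t2
        rw [hform, h1]
        simpa using t2
      · have t1 := hpd₁.dotProduct_mulVec_pos h1
        rw [star_trivial] at t1
        have t2 : 0 ≤ (z ∘ Sum.inr) ⬝ᵥ (H₂ + η • F₂₂) *ᵥ (z ∘ Sum.inr) := by
          rcases eq_or_ne (z ∘ Sum.inr) 0 with h | h
          · rw [h]; simp
          · have := hpd₂.dotProduct_mulVec_pos h; rw [star_trivial] at this; exact this.le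
        rw [hform]; linarith
    -- the minimum α of P's quadratic form on the sphere
    set α : ℝ := sInf ((fun z => z ⬝ᵥ P *ᵥ z) '' S) with hαdef
    obtain ⟨zP, hzPS, hzPval⟩ :
        α ∈ (fun z => z ⬝ᵥ P *ᵥ z) '' S :=
      (hScomp.image (quad_cont P)).sInf_mem (hSnonempty.image _)
    have hαpos : 0 < α := hzPval ▸ hPpos zP hzPS
    have hαle : ∀ z ∈ S, α ≤ z ⬝ᵥ P *ᵥ z := fun z hz =>
      csInf_le (hScomp.image (quad_cont P)).bddBelow ⟨z, hz, rfl⟩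
    -- constants
    set Fm : Matrix (Fin n ⊕ Fin m) (Fin n ⊕ Fin m) ℝ :=
      Matrix.fromBlocks F₁₁ F₁₂ F₁₂ᵀ F₂₂ with hFmdef
    set Fo : Matrix (Fin n ⊕ Fin m) (Fin n ⊕ Fin m) ℝ :=
      Matrix.fromBlocks 0 F₁₂ F₁₂ᵀ 0 with hFodef
    set C₁ : ℝ := ∑ p, ∑ q, |Fm p q| with hC₁def
    set C₂ : ℝ := ∑ p, ∑ q, |Fo p q| with hC₂def
    have hC₁ : 0 ≤ C₁ := Finset.sum_nonneg fun p _ =>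
      Finset.sum_nonneg fun q _ => abs_nonneg _
    have hC₂ : 0 ≤ C₂ := Finset.sum_nonneg fun p _ =>
      Finset.sum_nonneg fun q _ => abs_nonneg _
    -- decomposition of J μ
    have hdecomp : ∀ μ : ℝ, J μ =
        (μ - 1) • P + (η • Fm + ((Real.sqrt μ - 1) * η) • Fo) := by
      intro μ
      ext p q
      cases p <;> cases q <;>
        simp only [hJdef, hPdef, hFmdef, hFodef, Matrix.fromBlocks_apply₁₁,
          Matrix.fromBlocks_apply₁₂, Matrix.fromBlocks_apply₂₁, Matrix.fromBlocks_apply₂₂,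
          Matrix.add_apply, Matrix.smul_apply, Matrix.zero_apply, smul_eq_mul,
          Matrix.transpose_apply] <;>
        ring
    -- lower bound on Q μ z for μ ≥ 1 and z ∈ S
    have hlow : ∀ μ : ℝ, 1 ≤ μ → ∀ z ∈ S,
        (μ - 1) * α - η * C₁ - (Real.sqrt μ - 1) * η * C₂ ≤ Q μ z := by
      intro μ hμ1 z hz
      have hQsplit : Q μ z = (μ - 1) * (z ⬝ᵥ P *ᵥ z) + η * (z ⬝ᵥ Fm *ᵥ z)
          + (Real.sqrt μ - 1) * η * (z ⬝ᵥ Fo *ᵥ z) := by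
        rw [hQdef]
        simp only [hdecomp μ, Matrix.add_mulVec, dotProduct_add, smul_mulVec,
          dotProduct_smul, smul_eq_mul]
        ring
      have hb1 : |z ⬝ᵥ Fm *ᵥ z| ≤ C₁ := quad_abs_le Fm z (hSbound z hz)
      have hb2 : |z ⬝ᵥ Fo *ᵥ z| ≤ C₂ := quad_abs_le Fo z (hSbound z hz)
      have hP : α ≤ z ⬝ᵥ P *ᵥ z := hαle z hz
      have hsq1 : 1 ≤ Real.sqrt μ := by
        rw [show (1:ℝ) = Real.sqrt 1 by simp]
        exact Real.sqrt_le_sqrt hμ1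
      have e1 : (μ - 1) * α ≤ (μ - 1) * (z ⬝ᵥ P *ᵥ z) :=
        mul_le_mul_of_nonneg_left hP (by linarith)
      have e2 : -(η * C₁) ≤ η * (z ⬝ᵥ Fm *ᵥ z) :=
        neg_mul_le_of_abs_le _ _ _ hη.le hb1
      have e3 : -((Real.sqrt μ - 1) * η * C₂) ≤
          (Real.sqrt μ - 1) * η * (z ⬝ᵥ Fo *ᵥ z) :=
        neg_mul_le_of_abs_le _ _ _ (mul_nonneg (by linarith) hη.le) hb2
      rw [hQsplit]
      linarith
    -- choose M
    set t : ℝ := max (1 + (η * C₁ + η * C₂ + 1) / α) μ₀ with htdef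
    have ht1 : 1 < t := lt_of_lt_of_le hμ₀gt (le_max_right _ _)
    have htD : η * C₁ + η * C₂ + 1 ≤ (t - 1) * α := by
      have h : 1 + (η * C₁ + η * C₂ + 1) / α ≤ t := le_max_left _ _
      have h2 : (η * C₁ + η * C₂ + 1) / α ≤ t - 1 := by linarith
      calc η * C₁ + η * C₂ + 1 = (η * C₁ + η * C₂ + 1) / α * α := by
            field_simp
        _ ≤ (t - 1) * α := mul_le_mul_of_nonneg_right h2 hαpos.le
    refine ⟨t ^ 2, ?_, ?_⟩
    · calc μ₀ ≤ t := le_max_right _ _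
        _ ≤ t ^ 2 := by
          have := le_self_pow₀ ht1.le (two_ne_zero)
          linarith [this]
    · obtain ⟨zM, hzMS, hzMval⟩ := hgmem (t ^ 2)
      rw [← hzMval]
      have hM1 : (1:ℝ) ≤ t ^ 2 := one_le_pow₀ ht1.le
      have hsqt : Real.sqrt (t ^ 2) = t := Real.sqrt_sq (by linarith)
      have := hlow (t ^ 2) hM1 zM hzMS
      rw [hsqt] at this
      have hfin : 0 < (t ^ 2 - 1) * α - η * C₁ - (t - 1) * η * C₂ :=
        choose_pos α η C₁ C₂ t hαpos hη hC₁ hC₂ ht1 htD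
      linarith
  -- IVT
  obtain ⟨μs, hμsmem, hμs0⟩ : ∃ μs ∈ Set.Icc μ₀ M, g μs = 0 := by
    have := intermediate_value_Icc hMge hgcont.continuousOn
    have h0 : (0 : ℝ) ∈ Set.Icc (g μ₀) (g M) := ⟨hμ₀neg.le, hMpos.le⟩
    obtain ⟨μs, hμs, hval⟩ := this h0
    exact ⟨μs, hμs, hval⟩
  refine ⟨μs, lt_of_lt_of_le hμ₀gt hμsmem.1, ?_⟩
  -- J μs is PSD with nontrivial kernel
  obtain ⟨zs, hzsS, hzsQ⟩ := hgmem μs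
  rw [hμs0] at hzsQ
  have hpsd : (J μs).PosSemidef := by
    rw [posSemidef_iff_dotProduct_mulVec]; constructor
    · show (J μs)ᴴ = J μs
      rw [conjTranspose_eq_transpose_of_trivial, hJdef]
      rw [Matrix.fromBlocks_transpose]
      simp only [Matrix.transpose_add, Matrix.transpose_smul, Matrix.transpose_transpose,
        hH₁symm.eq, hF₁₁symm.eq, hH₂symm.eq, hF₂₂symm.eq]
    · intro x
      rw [star_trivial]
      rcases eq_or_ne x 0 with hx | hx
      · simp [hx]
      · have hxn : ‖x‖ ≠ 0 := norm_ne_zero_iff.mpr hx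
        have hxS : (‖x‖⁻¹ • x) ∈ S := by
          rw [hSdef, mem_sphere_zero_iff_norm, norm_smul]
          simp [norm_inv, inv_mul_cancel₀ hxn]
        have h0 : 0 ≤ Q μs (‖x‖⁻¹ • x) := by
          rw [← hμs0]; exact hgle μs _ hxS
        rw [hQdef] at h0
        simp only [] at h0
        rw [quad_scale] at h0
        have hc : (0:ℝ) < (‖x‖⁻¹) ^ 2 := by positivity
        exact (mul_nonneg_iff_of_pos_left hc).mp h0
  have hker : J μs *ᵥ zs = 0 := by
    have := (hpsd.dotProduct_mulVec_zero_iff zs).mp ?_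
    · exact this
    · rw [star_trivial]; exact hzsQ
  have hdet : (J μs).det = 0 :=
    Matrix.exists_mulVec_eq_zero_iff.mp ⟨zs, hSne zs hzsS, hker⟩
  exact hdet
end
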